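/- For all integers n ≥ 1 and 1 ≤ k ≤ n−1, the Dushnik–Miller dimension of the poset M^n_{[0,k]} of multisets with elements in {1,…,n} and total size (counted with multiplicity) at most k, ordered by multiset inclusion, equals N(n, k+1), the minimum cardinality of a (k+1)-suitable set of permutations of {1,…,n}. -/

import Mathlib

/-- The Dushnik-Miller dimension of a poset `P`: the least `d` such that there is
an order embedding of `P` into `ℝ^d` with the componentwise order. -/
noncomputable def dimDM (P : Type*) [PartialOrder P] : ℕ :=
  sInf {d : ℕ | ∃ f : P → (Fin d → ℝ), ∀ a b : P, (f a ≤ f b ↔ a ≤ b)}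

/-- A set `S` of permutations of `{1,…,n}` (modelled as `Fin n`) is `k`-suitable if for
every pointed `k`-subset `(A, a)` there is `σ ∈ S` with `σ b ≤ σ a` for every `b ∈ A`. -/
def IsSuitable (n k : ℕ) (S : Finset (Equiv.Perm (Fin n))) : Prop :=
  ∀ A : Finset (Fin n), A.card = k → ∀ a ∈ A, ∃ σ ∈ S, ∀ b ∈ A, σ b ≤ σ a

/-- `N(n, k)`: the minimum cardinality of a `k`-suitable set of permutations of `{1,…,n}`. -/
noncomputable def suitableNumber (n k : ℕ) : ℕ :=
  sInf {m : ℕ | ∃ S : Finset (Equiv.Perm (Fin n)), IsSuitable n k S ∧ S.card = m}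

open Finset

/-- Weight function associated to a permutation. -/
noncomputable def gfun (n k : ℕ) (σ : Equiv.Perm (Fin n)) (M : Multiset (Fin n)) : ℝ :=
  ∑ x : Fin n, (M.count x : ℝ) * ((k : ℝ) + 1) ^ (σ x : ℕ)

lemma sum_count_eq_card (n : ℕ) (M : Multiset (Fin n)) :
    ∑ x : Fin n, M.count x = Multiset.card M := by
  rw [← Multiset.toFinset_sum_count_eq M]
  refine (Finset.sum_subset (Finset.subset_univ _) ?_).symm
  intro x _ hx
  exact Multiset.count_eq_zero_of_notMem (by simpa using hx)

lemma gfun_mono (n k : ℕ) (σ : Equiv.Perm (Fin n)) {M M' : Multiset (Fin n)}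
    (h : M ≤ M') : gfun n k σ M ≤ gfun n k σ M' := by
  apply Finset.sum_le_sum
  intro x _
  have h1 : (M.count x : ℝ) ≤ (M'.count x : ℝ) := by
    exact_mod_cast Multiset.le_iff_count.mp h x
  have h2 : (0 : ℝ) ≤ ((k : ℝ) + 1) ^ (σ x : ℕ) := by positivity
  exact mul_le_mul_of_nonneg_right h1 h2

lemma key_lt (n k : ℕ) (hk1 : 1 ≤ k) (hkn : k + 1 ≤ n)
    (S : Finset (Equiv.Perm (Fin n))) (hS : IsSuitable n (k + 1) S)
    (M M' : Multiset (Fin n)) (hM' : Multiset.card M' ≤ k)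
    (h : ¬ M ≤ M') : ∃ σ ∈ S, gfun n k σ M' < gfun n k σ M := by
  -- find a witness where M has bigger multiplicity
  have ha : ∃ a, M'.count a < M.count a := by
    by_contra hc
    push_neg at hc
    exact h (Multiset.le_iff_count.mpr fun a => hc a)
  obtain ⟨a, ha⟩ := ha
  clear h
  set D : Finset (Fin n) := Finset.univ.filter (fun x => M.count x < M'.count x) with hD
  have haD : a ∉ D := by
    simp only [hD, Finset.mem_filter]
    rintro ⟨-, h2⟩
    omega
  have hDcard : D.card ≤ k := by
    calc D.card = ∑ x ∈ D, 1 := by simp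
    _ ≤ ∑ x ∈ D, M'.count x := by
        apply Finset.sum_le_sum
        intro x hx
        simp only [hD, Finset.mem_filter] at hx
        omega
    _ ≤ ∑ x : Fin n, M'.count x := by
        apply Finset.sum_le_sum_of_subset (Finset.subset_univ _)
    _ = Multiset.card M' := sum_count_eq_card n M'
    _ ≤ k := hM'
  have hBcard : (insert a D).card ≤ k + 1 := by
    calc (insert a D).card ≤ D.card + 1 := Finset.card_insert_le _ _
    _ ≤ k + 1 := by omega
  obtain ⟨A, hBA, hAcard⟩ := Finset.exists_superset_card_eq hBcard (by simpa using hkn)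
  have haA : a ∈ A := hBA (Finset.mem_insert_self a D)
  obtain ⟨σ, hσS, hσ⟩ := hS A hAcard a haA
  refine ⟨σ, hσS, ?_⟩
  -- notation
  set c : ℝ := (k : ℝ) + 1 with hc
  have hcpos : (0 : ℝ) < c := by positivity
  set w : Fin n → ℝ := fun x => c ^ (σ x : ℕ) with hw
  have hwpos : ∀ x, (0 : ℝ) < w x := fun x => by positivity
  -- all elements of D are strictly below a under σ
  have hstrict : ∀ x ∈ D, (σ x : ℕ) < (σ a : ℕ) := by
    intro x hx
    have hxa : x ≠ a := fun he => haD (he ▸ hx)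
    have hle : σ x ≤ σ a := hσ x (hBA (Finset.mem_insert_of_mem hx))
    have hne : σ x ≠ σ a := fun he => hxa (σ.injective he)
    exact lt_of_le_of_ne (by exact_mod_cast hle) (by
      intro he
      exact hne (Fin.ext he))
  -- bound the D-part
  have hsumD : (∑ x ∈ D, (M'.count x : ℝ) * w x) < w a := by
    have hmul : (∑ x ∈ D, (M'.count x : ℝ) * w x) * c ≤ (k : ℝ) * c ^ (σ a : ℕ) := by
      calc (∑ x ∈ D, (M'.count x : ℝ) * w x) * c
          = ∑ x ∈ D, (M'.count x : ℝ) * c ^ ((σ x : ℕ) + 1) := by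
            rw [Finset.sum_mul]
            apply Finset.sum_congr rfl
            intro x _
            rw [mul_assoc, hw, ← pow_succ]
      _ ≤ ∑ x ∈ D, (M'.count x : ℝ) * c ^ (σ a : ℕ) := by
            apply Finset.sum_le_sum
            intro x hx
            apply mul_le_mul_of_nonneg_left _ (by positivity)
            apply pow_le_pow_right₀ (by rw [hc]; norm_num : (1 : ℝ) ≤ c)
            have := hstrict x hx
            omega
      _ = (∑ x ∈ D, (M'.count x : ℝ)) * c ^ (σ a : ℕ) := by
            rw [Finset.sum_mul]
      _ ≤ (k : ℝ) * c ^ (σ a : ℕ) := by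
            apply mul_le_mul_of_nonneg_right _ (by positivity)
            have : ∑ x ∈ D, M'.count x ≤ k := by
              calc ∑ x ∈ D, M'.count x ≤ ∑ x : Fin n, M'.count x :=
                    Finset.sum_le_sum_of_subset (Finset.subset_univ _)
              _ = Multiset.card M' := sum_count_eq_card n M'
              _ ≤ k := hM'
            calc (∑ x ∈ D, (M'.count x : ℝ)) = ((∑ x ∈ D, M'.count x : ℕ) : ℝ) := by
                  push_cast; ring
            _ ≤ (k : ℝ) := by exact_mod_cast this
    have hwa : w a = c ^ (σ a : ℕ) := rfl
    have hklt : (k : ℝ) * c ^ (σ a : ℕ) < c ^ (σ a : ℕ) * c := by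
      rw [mul_comm (c ^ (σ a : ℕ)) c]
      apply mul_lt_mul_of_pos_right _ (by positivity)
      rw [hc]; linarith
    have hfin : (∑ x ∈ D, (M'.count x : ℝ) * w x) * c < w a * c := by
      rw [hwa]
      exact lt_of_le_of_lt hmul hklt
    exact lt_of_mul_lt_mul_right hfin (le_of_lt hcpos)
  -- assemble
  have hsplit : ∀ N : Multiset (Fin n),
      gfun n k σ N = (∑ x ∈ D, (N.count x : ℝ) * w x)
        + ∑ x ∈ Finset.univ.filter (fun x => ¬ M.count x < M'.count x),
            (N.count x : ℝ) * w x := by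
    intro N
    rw [gfun, hD]
    exact (Finset.sum_filter_add_sum_filter_not _ _ _).symm
  rw [hsplit M, hsplit M']
  set Dc := Finset.univ.filter (fun x => ¬ M.count x < M'.count x) with hDc
  have h1 : ∑ x ∈ D, (M.count x : ℝ) * w x ≥ 0 := by
    apply Finset.sum_nonneg
    intro x _
    exact mul_nonneg (by positivity) (le_of_lt (hwpos x))
  have h2 : (∑ x ∈ Dc, (M'.count x : ℝ) * w x) + w a
      ≤ ∑ x ∈ Dc, (M.count x : ℝ) * w x := by
    have haDc : a ∈ Dc := by
      simp only [hDc, Finset.mem_filter]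
      exact ⟨Finset.mem_univ _, by omega⟩
    rw [← Finset.sum_erase_add Dc _ haDc, ← Finset.sum_erase_add Dc
      (fun x => (M.count x : ℝ) * w x) haDc]
    have hterm : (M'.count a : ℝ) * w a + w a ≤ (M.count a : ℝ) * w a := by
      have : (M'.count a : ℝ) + 1 ≤ (M.count a : ℝ) := by exact_mod_cast ha
      nlinarith [hwpos a]
    have hrest : ∑ x ∈ Dc.erase a, (M'.count x : ℝ) * w x
        ≤ ∑ x ∈ Dc.erase a, (M.count x : ℝ) * w x := by
      apply Finset.sum_le_sum
      intro x hx
      have hxDc : x ∈ Dc := Finset.mem_of_mem_erase hx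
      simp only [hDc, Finset.mem_filter] at hxDc
      have : (M'.count x : ℝ) ≤ (M.count x : ℝ) := by
        have := hxDc.2
        exact_mod_cast (by omega : M'.count x ≤ M.count x)
      exact mul_le_mul_of_nonneg_right this (le_of_lt (hwpos x))
    linarith
  linarith

lemma exists_embedding (n k : ℕ) (hk1 : 1 ≤ k) (hkn : k + 1 ≤ n)
    (S : Finset (Equiv.Perm (Fin n))) (hS : IsSuitable n (k + 1) S) :
    ∃ f : {M : Multiset (Fin n) // Multiset.card M ≤ k} → (Fin S.card → ℝ),
      ∀ a b, (f a ≤ f b ↔ a ≤ b) := by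
  refine ⟨fun M i => gfun n k ((S.equivFin.symm i : S) : Equiv.Perm (Fin n)) M.val, ?_⟩
  intro a b
  constructor
  · intro hfab
    by_contra hle
    have hle' : ¬ a.val ≤ b.val := fun h => hle h
    obtain ⟨σ, hσS, hlt⟩ := key_lt n k hk1 hkn S hS a.val b.val b.prop hle'
    have := hfab (S.equivFin ⟨σ, hσS⟩)
    simp only [Equiv.symm_apply_apply] at this
    exact absurd this (not_le.mpr hlt)
  · intro h i
    exact gfun_mono n k _ h

lemma suitable_of_embedding (n k d : ℕ) (hk1 : 1 ≤ k)
    (f : {M : Multiset (Fin n) // Multiset.card M ≤ k} → (Fin d → ℝ))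
    (hf : ∀ a b, (f a ≤ f b ↔ a ≤ b)) :
    ∃ S : Finset (Equiv.Perm (Fin n)), IsSuitable n (k + 1) S ∧ S.card ≤ d := by
  set g : Fin d → Fin n → ℝ := fun i x => f ⟨{x}, by simpa using hk1⟩ i with hg
  set σs : Fin d → Equiv.Perm (Fin n) := fun i => (Tuple.sort (g i))⁻¹ with hσs
  refine ⟨Finset.image σs Finset.univ, ?_, ?_⟩
  · intro A hA a haA
    -- the multiset (A.erase a).val has card k and does not contain a
    have hMAcard : Multiset.card (A.erase a).val ≤ k := by
      have h1 : (A.erase a).card = k := by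
        rw [Finset.card_erase_of_mem haA, hA]
        omega
      exact h1.le
    have hsing : Multiset.card ({a} : Multiset (Fin n)) ≤ k := by simpa using hk1
    have hnle : ¬ (⟨{a}, hsing⟩ : {M : Multiset (Fin n) // Multiset.card M ≤ k})
        ≤ ⟨(A.erase a).val, hMAcard⟩ := by
      intro hle
      have : ({a} : Multiset (Fin n)) ≤ (A.erase a).val := hle
      rw [Multiset.singleton_le] at this
      exact (Finset.notMem_erase a A) this
    have hnlef : ¬ f ⟨{a}, hsing⟩ ≤ f ⟨(A.erase a).val, hMAcard⟩ :=
      fun h => hnle ((hf _ _).mp h)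
    rw [Pi.le_def] at hnlef
    push_neg at hnlef
    obtain ⟨i, hi⟩ := hnlef
    refine ⟨σs i, Finset.mem_image.mpr ⟨i, Finset.mem_univ i, rfl⟩, ?_⟩
    intro b hb
    rcases eq_or_ne b a with rfl | hba
    · exact le_refl _
    · -- g i b < g i a
      have hbA : b ∈ A.erase a := Finset.mem_erase.mpr ⟨hba, hb⟩
      have hble : (⟨{b}, by simpa using hk1⟩ : {M : Multiset (Fin n) // Multiset.card M ≤ k})
          ≤ ⟨(A.erase a).val, hMAcard⟩ := by
        show ({b} : Multiset (Fin n)) ≤ (A.erase a).val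
        rw [Multiset.singleton_le]
        exact hbA
      have hfb := (hf _ _).mpr hble
      have hgb : g i b < g i a := lt_of_le_of_lt (hfb i) hi
      -- now use sorting
      by_contra hcon
      push_neg at hcon
      have hmono := Tuple.monotone_sort (g i)
      have : (g i ∘ Tuple.sort (g i)) (σs i a) ≤ (g i ∘ Tuple.sort (g i)) (σs i b) :=
        hmono (le_of_lt hcon)
      simp only [hσs, Function.comp_apply, Equiv.Perm.inv_def, Equiv.apply_symm_apply] at this
      exact absurd this (not_le.mpr hgb)
  · calc (Finset.image σs Finset.univ).card ≤ Finset.univ.card :=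
        Finset.card_image_le
    _ = d := by simp

lemma suitable_univ (n k : ℕ) (hn : 1 ≤ n) : IsSuitable n k Finset.univ := by
  intro A hA a haA
  have hne : (Finset.univ : Finset (Fin n)).Nonempty := ⟨a, Finset.mem_univ a⟩
  set m := Finset.univ.max' hne with hm
  refine ⟨Equiv.swap a m, Finset.mem_univ _, ?_⟩
  intro b hb
  have hswapa : Equiv.swap a m a = m := Equiv.swap_apply_left a m
  rw [hswapa]
  exact Finset.le_max' _ _ (Finset.mem_univ _)

/-- `dim(M^n_{[0,k]}) = N(n, k+1)` for `1 ≤ k ≤ n - 1`, where `M^n_{[0,k]}` is the poset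
of multisets with elements in `{1,…,n}` of total size at most `k`, ordered by
multiset inclusion (containment with multiplicity). -/
theorem dimDM_multiset_eq_suitableNumber (n k : ℕ) (hn : 1 ≤ n) (hk1 : 1 ≤ k)
    (hk2 : k ≤ n - 1) :
    dimDM {M : Multiset (Fin n) // Multiset.card M ≤ k} = suitableNumber n (k + 1) := by
  have hkn : k + 1 ≤ n := by omega
  -- the set defining suitableNumber is nonempty
  have hne : {m : ℕ | ∃ S : Finset (Equiv.Perm (Fin n)),
      IsSuitable n (k + 1) S ∧ S.card = m}.Nonempty :=
    ⟨(Finset.univ : Finset (Equiv.Perm (Fin n))).card, Finset.univ,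
      suitable_univ n (k + 1) hn, rfl⟩
  have hmem := Nat.sInf_mem hne
  obtain ⟨S, hS, hScard⟩ := hmem
  obtain ⟨f, hf⟩ := exists_embedding n k hk1 hkn S hS
  -- dimension set nonempty
  have hdimne : {d : ℕ | ∃ g : {M : Multiset (Fin n) // Multiset.card M ≤ k} → (Fin d → ℝ),
      ∀ a b, (g a ≤ g b ↔ a ≤ b)}.Nonempty := ⟨S.card, f, hf⟩
  apply le_antisymm
  · -- dimDM ≤ S.card = suitableNumber
    have h1 : dimDM {M : Multiset (Fin n) // Multiset.card M ≤ k} ≤ S.card :=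
      Nat.sInf_le ⟨f, hf⟩
    rw [hScard] at h1
    exact h1
  · -- suitableNumber ≤ dimDM
    have hmem2 := Nat.sInf_mem hdimne
    obtain ⟨F, hF⟩ := hmem2
    obtain ⟨S', hS', hS'card⟩ := suitable_of_embedding n k _ hk1 F hF
    have h2 : suitableNumber n (k + 1) ≤ S'.card := Nat.sInf_le ⟨S', hS', rfl⟩
    exact le_trans h2 hS'card
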